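/- Let K ∈ L¹(ℝⁿ), 0 ≤ θ < 1, 0 < δ < 1, and define [K]_{θ} := sup_{0<R<1} sup_{|y|<R} ∫_{|x| ≥ 2R^{1-θ}} |K(x - y) - K(x)| dx. Let f ∈ L^∞(ℝⁿ) vanish on {|y| < 2δ^{1-θ}} and set a_δ := ∫ K(-y) f(y) dy. Then (1/|B(0,δ)|) ∫_{B(0,δ)} |(K∗f)(x) - a_δ| dx ≤ [K]_θ ‖f‖_{L^∞}. -/

import Mathlib

open MeasureTheory Metric

/-- If `K ∈ L¹(ℝⁿ)` satisfies the Fefferman oscillation kernel condition with bound `A`,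
and `f ∈ L^∞` vanishes on `{|y| < 2δ^{1-θ}}`, then the average over `B(0,δ)` of
`|(K∗f)(x) - a_δ|` is at most `A ‖f‖_∞`, where `a_δ = ∫ K(-y) f(y) dy`. -/
theorem stmt9 (n : ℕ) (K f : EuclideanSpace ℝ (Fin n) → ℂ)
    (hK : Integrable K) (hf : Measurable f)
    (θ δ A Cf : ℝ) (hθ : 0 ≤ θ) (hθ1 : θ < 1) (hδ : 0 < δ) (hδ1 : δ < 1)
    (hA : ∀ R : ℝ, 0 < R → R < 1 → ∀ y : EuclideanSpace ℝ (Fin n), ‖y‖ < R →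
      (∫ x in {x : EuclideanSpace ℝ (Fin n) | 2 * R ^ (1 - θ) ≤ ‖x‖},
        ‖K (x - y) - K x‖) ≤ A)
    (hCf : ∀ y, ‖f y‖ ≤ Cf)
    (hsupp : ∀ y, ‖y‖ < 2 * δ ^ (1 - θ) → f y = 0) :
    (volume (ball (0 : EuclideanSpace ℝ (Fin n)) δ)).toReal⁻¹ *
        ∫ x in ball (0 : EuclideanSpace ℝ (Fin n)) δ,
          ‖(∫ y, K (x - y) * f y) - ∫ y, K (-y) * f y‖
      ≤ A * Cf := by
  have hCf0 : 0 ≤ Cf := (norm_nonneg _).trans (hCf 0)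
  set S : Set (EuclideanSpace ℝ (Fin n)) := {y | 2 * δ ^ (1 - θ) ≤ ‖y‖} with hSdef
  have hSmeas : MeasurableSet S := measurableSet_le measurable_const measurable_norm
  have hA0 : 0 ≤ A := by
    refine le_trans ?_ (hA δ hδ hδ1 0 (by simpa using hδ))
    exact integral_nonneg fun x => norm_nonneg _
  have hKn : Integrable (fun y : EuclideanSpace ℝ (Fin n) => K (-y)) := by
    have := (integrable_comp_sub_left K 0).2 hK
    simpa [zero_sub] using this
  have key : ∀ x ∈ ball (0 : EuclideanSpace ℝ (Fin n)) δ,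
      ‖(∫ y, K (x - y) * f y) - ∫ y, K (-y) * f y‖ ≤ A * Cf := by
    intro x hx
    rw [mem_ball, dist_zero_right] at hx
    have hKx : Integrable (fun y => K (x - y)) := (integrable_comp_sub_left K x).2 hK
    have hint1 : Integrable (fun y => K (x - y) * f y) := by
      have : Integrable (fun y => f y * K (x - y)) :=
        hKx.bdd_mul hf.aestronglyMeasurable (Filter.Eventually.of_forall hCf)
      simpa [mul_comm] using this
    have hint2 : Integrable (fun y => K (-y) * f y) := by
      have : Integrable (fun y => f y * K (-y)) :=
        hKn.bdd_mul hf.aestronglyMeasurable (Filter.Eventually.of_forall hCf)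
      simpa [mul_comm] using this
    have hd : Integrable (fun y => K (x - y) - K (-y)) := hKx.sub hKn
    have hg : Integrable (fun y => (K (x - y) - K (-y)) * f y) := by
      have : Integrable (fun y => f y * (K (x - y) - K (-y))) :=
        hd.bdd_mul hf.aestronglyMeasurable (Filter.Eventually.of_forall hCf)
      simpa [mul_comm] using this
    rw [← integral_sub hint1 hint2]
    have hrw : (fun y => K (x - y) * f y - K (-y) * f y)
        = fun y => (K (x - y) - K (-y)) * f y := by
      funext y; ring
    rw [hrw]
    calc ‖∫ y, (K (x - y) - K (-y)) * f y‖
        ≤ ∫ y, ‖(K (x - y) - K (-y)) * f y‖ := norm_integral_le_integral_norm _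
      _ ≤ ∫ y, S.indicator (fun y => Cf * ‖K (x - y) - K (-y)‖) y := by
          refine integral_mono hg.norm
            ((hd.norm.const_mul Cf).indicator hSmeas) fun y => ?_
          by_cases hy : y ∈ S
          · rw [Set.indicator_of_mem hy, norm_mul]
            rw [mul_comm]
            exact mul_le_mul_of_nonneg_right (hCf y) (norm_nonneg _)
          · rw [Set.indicator_of_notMem hy]
            have : f y = 0 := hsupp y (by simpa [hSdef, not_le] using hy)
            simp [this]
      _ = Cf * ∫ y in S, ‖K (x - y) - K (-y)‖ := by
          rw [integral_indicator hSmeas]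
          simp_rw [← smul_eq_mul, integral_smul]
      _ = Cf * ∫ y in S, ‖K (y - (-x)) - K y‖ := by
          congr 1
          rw [← integral_indicator hSmeas, ← integral_indicator hSmeas]
          rw [← integral_neg_eq_self (fun y => S.indicator (fun y => ‖K (x - y) - K (-y)‖) y)
            volume]
          congr 1
          funext y
          by_cases hy : y ∈ S
          · have hy' : -y ∈ S := by simpa [hSdef] using hy
            rw [Set.indicator_of_mem hy', Set.indicator_of_mem hy]
            simp [sub_neg_eq_add, add_comm]
          · have hy' : -y ∉ S := by simpa [hSdef] using hy
            rw [Set.indicator_of_notMem hy', Set.indicator_of_notMem hy]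
      _ ≤ Cf * A := by
          refine mul_le_mul_of_nonneg_left ?_ hCf0
          exact hA δ hδ hδ1 (-x) (by simpa using hx)
      _ = A * Cf := mul_comm _ _
  have hvol : 0 < (volume (ball (0 : EuclideanSpace ℝ (Fin n)) δ)).toReal := by
    apply ENNReal.toReal_pos
    · exact (measure_ball_pos volume 0 hδ).ne'
    · exact measure_ball_lt_top.ne
  rw [inv_mul_le_iff₀ hvol]
  calc (∫ x in ball (0 : EuclideanSpace ℝ (Fin n)) δ,
        ‖(∫ y, K (x - y) * f y) - ∫ y, K (-y) * f y‖)
      ≤ ‖∫ x in ball (0 : EuclideanSpace ℝ (Fin n)) δ,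
        ‖(∫ y, K (x - y) * f y) - ∫ y, K (-y) * f y‖‖ := le_abs_self _
    _ ≤ (A * Cf) * (volume (ball (0 : EuclideanSpace ℝ (Fin n)) δ)).toReal := by
        refine norm_setIntegral_le_of_norm_le_const_ae' measure_ball_lt_top
          ?_
        filter_upwards with x hx
        simpa [abs_of_nonneg (norm_nonneg _)] using key x hx
    _ = (volume (ball (0 : EuclideanSpace ℝ (Fin n)) δ)).toReal * (A * Cf) := mul_comm _ _
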